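/- For the Bernoulli model, p_θ(x) = (1−θ)[1 + x(2θ−1)/(1−θ)] for x ∈ {0,1} and θ ∈ (0,1), the deformed distribution associated with the Jones et al. likelihood with α = 2 is p*_θ(x_1^n) = N(θ)[1 + x̄(2θ−1)/(1−θ)] with N(θ)^{-1} = 2^{n−1}/(1−θ), and the conditional distribution of X_1^n given Σ x_i = t under p*_θ is uniform on the C(n,t) binary strings with sum t. -/

import Mathlib

lemma fin2_val (v : Fin 2) : (v : ℕ) = if v = 1 then 1 else 0 := by fin_cases v <;> rfl

lemma sum_eq_card_filter {n : ℕ} (y : Fin n → Fin 2) :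
    (∑ i, (y i : ℕ)) = (Finset.univ.filter (fun i => y i = 1)).card := by
  rw [Finset.card_filter]
  exact Finset.sum_congr rfl fun i _ => fin2_val (y i)

/-- The number of binary strings of length `n` with sum `t` is `C(n,t)`. -/
lemma fiber_card (n t : ℕ) :
    (Finset.univ.filter (fun y : Fin n → Fin 2 => (∑ i, (y i : ℕ)) = t)).card
      = n.choose t := by
  have h2 : ((Finset.univ : Finset (Fin n)).powersetCard t).card = n.choose t := by
    rw [Finset.card_powersetCard, Finset.card_univ, Fintype.card_fin]
  rw [← h2]
  refine Finset.card_nbij' (fun y => Finset.univ.filter (fun i => y i = 1))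
    (fun s => fun k => if k ∈ s then 1 else 0) ?_ ?_ ?_ ?_
  · intro y hy
    simp only [Finset.mem_coe, Finset.mem_filter, Finset.mem_univ, true_and] at hy
    rw [Finset.mem_coe, Finset.mem_powersetCard]
    exact ⟨Finset.filter_subset _ _, by rw [← sum_eq_card_filter]; exact hy⟩
  · intro s hs
    simp only [Finset.mem_coe, Finset.mem_powersetCard] at hs
    simp only [Finset.mem_coe, Finset.mem_filter, Finset.mem_univ, true_and]
    rw [sum_eq_card_filter, ← hs.2]
    congr 1
    ext k
    simp only [Finset.mem_filter, Finset.mem_univ, true_and]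
    split_ifs with h
    · simp [h]
    · simp [h]
  · intro y _
    funext k
    simp only [Finset.mem_filter, Finset.mem_univ, true_and]
    split_ifs with h
    · exact h.symm
    · omega
  · intro s _
    ext k
    simp only [Finset.mem_filter, Finset.mem_univ, true_and]
    split_ifs with h
    · simp [h]
    · simp [h]

/-- Per-coordinate sum over all binary strings. -/
lemma coord_sum (n : ℕ) (i : Fin n) :
    (∑ y : Fin n → Fin 2, ((y i : ℕ) : ℝ)) = 2 ^ (n - 1) := by
  have := Fintype.sum_equiv (Equiv.funSplitAt i (Fin 2))
    (fun y : Fin n → Fin 2 => ((y i : ℕ) : ℝ))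
    (fun p => ((p.1 : ℕ) : ℝ)) (fun y => rfl)
  rw [this, Fintype.sum_prod_type]
  have hcard : Fintype.card { j : Fin n // j ≠ i } = n - 1 := by
    rw [Fintype.card_subtype_compl, Fintype.card_subtype_eq, Fintype.card_fin]
  simp only [Finset.sum_const, Finset.card_univ, Fintype.card_fun, Fintype.card_fin, hcard,
    nsmul_eq_mul]
  rw [Fin.sum_univ_two]
  norm_num

theorem bernoulli_deformed_distribution (n : ℕ) (hn : 0 < n) (θ : ℝ)
    (hθ0 : 0 < θ) (hθ1 : θ < 1)
    (q : (Fin n → Fin 2) → ℝ)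
    (hq : ∀ x, q x = 1 + ((∑ i, ((x i : ℕ) : ℝ)) / n) * ((2 * θ - 1) / (1 - θ))) :
    (∑ y : Fin n → Fin 2, q y = (2 : ℝ) ^ (n - 1) / (1 - θ)) ∧
    (∀ x, q x / (∑ y : Fin n → Fin 2, q y) = ((1 - θ) / (2 : ℝ) ^ (n - 1)) * q x) ∧
    (∀ (x : Fin n → Fin 2) (t : ℕ), (∑ i, (x i : ℕ)) = t →
      q x / (∑ y ∈ Finset.univ.filter (fun y : Fin n → Fin 2 => (∑ i, (y i : ℕ)) = t), q y)
        = 1 / (n.choose t : ℝ)) := by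
  have hθ1' : (1 : ℝ) - θ ≠ 0 := by linarith
  have hn' : (n : ℝ) ≠ 0 := Nat.cast_ne_zero.mpr hn.ne'
  -- total sum
  have htot : ∑ y : Fin n → Fin 2, q y = (2 : ℝ) ^ (n - 1) / (1 - θ) := by
    have hsum : ∑ y : Fin n → Fin 2, (∑ i, ((y i : ℕ) : ℝ))
        = n * 2 ^ (n - 1) := by
      rw [Finset.sum_comm]
      simp only [coord_sum]
      rw [Finset.sum_const, Finset.card_univ, Fintype.card_fin, nsmul_eq_mul]
    simp only [hq]
    rw [Finset.sum_add_distrib, Finset.sum_const, Finset.card_univ, Fintype.card_fun,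
      Fintype.card_fin, Fintype.card_fin, nsmul_eq_mul, mul_one,
      ← Finset.sum_mul, ← Finset.sum_div, hsum]
    have h2n : (2 : ℝ) ^ n = 2 * 2 ^ (n - 1) := by
      rw [← pow_succ']
      congr 1
      omega
    field_simp
    rw [Nat.cast_pow, Nat.cast_ofNat, h2n]
    ring
  refine ⟨htot, ?_, ?_⟩
  · intro x
    rw [htot, div_div_eq_mul_div]
    ring
  · intro x t hxt
    have htn : t ≤ n := by
      rw [← hxt]
      calc (∑ i, (x i : ℕ)) ≤ ∑ _i : Fin n, 1 :=
            Finset.sum_le_sum fun i _ => by omega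
        _ = n := by simp
    -- q is constant on the fiber
    have hconst : ∀ y ∈ Finset.univ.filter
        (fun y : Fin n → Fin 2 => (∑ i, (y i : ℕ)) = t), q y = q x := by
      intro y hy
      simp only [Finset.mem_filter, Finset.mem_univ, true_and] at hy
      rw [hq, hq]
      have h1 : (∑ i, ((y i : ℕ) : ℝ)) = (t : ℝ) := by
        rw [← Nat.cast_sum, hy]
      have h2 : (∑ i, ((x i : ℕ) : ℝ)) = (t : ℝ) := by
        rw [← Nat.cast_sum, hxt]
      rw [h1, h2]
    have hfib : (∑ y ∈ Finset.univ.filter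
        (fun y : Fin n → Fin 2 => (∑ i, (y i : ℕ)) = t), q y)
        = (n.choose t : ℝ) * q x := by
      rw [Finset.sum_congr rfl hconst, Finset.sum_const, fiber_card, nsmul_eq_mul]
    -- q x positive
    have hqx : 0 < q x := by
      rw [hq]
      have h2 : (∑ i, ((x i : ℕ) : ℝ)) = (t : ℝ) := by rw [← Nat.cast_sum, hxt]
      rw [h2]
      have hs0 : (0 : ℝ) ≤ (t : ℝ) / n := by positivity
      have hs1 : (t : ℝ) / n ≤ 1 := by
        rw [div_le_one (by exact_mod_cast hn)]
        exact_mod_cast htn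
      have hkey : 0 < 1 - θ + ((t : ℝ) / n) * (2 * θ - 1) := by
        nlinarith [mul_nonneg hs0 hθ0.le]
      have : 1 + (t : ℝ) / n * ((2 * θ - 1) / (1 - θ))
          = (1 - θ + ((t : ℝ) / n) * (2 * θ - 1)) / (1 - θ) := by
        field_simp
      rw [this]
      exact div_pos hkey (by linarith)
    have hch : (n.choose t : ℝ) ≠ 0 := by
      exact Nat.cast_ne_zero.mpr (Nat.choose_pos htn).ne'
    rw [hfib, div_eq_div_iff (mul_ne_zero hch hqx.ne') hch]
    ring
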